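/- Let X and Y be reflexive real Banach spaces such that the closed unit ball of the dual Y* equals the convex hull of its set of exposed points. Suppose T : X → Y is a compact bounded linear operator that is a left symmetric point of K(X,Y) with respect to Birkhoff–James orthogonality. Then for every y* ∈ M_{T*} that is an exposed point of the closed unit ball of Y*, the functional T*(y*) is a left symmetric point of X* with respect to Birkhoff–James orthogonality, where T* : Y* → X* denotes the adjoint operator. -/

import Mathlib

open Filter Topology Set Metric NormedSpace

noncomputable section

/-- Birkhoff–James orthogonality: `x ⊥_B y` iff `‖x + t • y‖ ≥ ‖x‖` for all real `t`. -/
def BJOrth {E : Type*} [NormedAddCommGroup E] [NormedSpace ℝ E] (x y : E) : Prop :=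
  ∀ t : ℝ, ‖x‖ ≤ ‖x + t • y‖

/-- The norm derivative `ρ'₊(x,y) = ‖x‖ · lim_{t→0⁺} (‖x+ty‖-‖x‖)/t`. -/
def rhoPlus {E : Type*} [NormedAddCommGroup E] [NormedSpace ℝ E] (x y : E) : ℝ :=
  ‖x‖ * limUnder (𝓝[>] (0 : ℝ)) (fun t => (‖x + t • y‖ - ‖x‖) / t)

/-- The norm derivative `ρ'₋(x,y) = ‖x‖ · lim_{t→0⁻} (‖x+ty‖-‖x‖)/t`. -/
def rhoMinus {E : Type*} [NormedAddCommGroup E] [NormedSpace ℝ E] (x y : E) : ℝ :=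
  ‖x‖ * limUnder (𝓝[<] (0 : ℝ)) (fun t => (‖x + t • y‖ - ‖x‖) / t)

/-- The norm derivative `ρ'(x,y) = (ρ'₊(x,y) + ρ'₋(x,y))/2`. -/
def rhoDer {E : Type*} [NormedAddCommGroup E] [NormedSpace ℝ E] (x y : E) : ℝ :=
  (rhoPlus x y + rhoMinus x y) / 2

/-- `x` is an exposed point of the closed unit ball of `E`: there is a norm-one functional `f`
with `f x = 1` and `f u < 1` for every `u` in the ball with `u ≠ x`. -/
def ExposedPt {E : Type*} [NormedAddCommGroup E] [NormedSpace ℝ E] (x : E) : Prop :=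
  ‖x‖ ≤ 1 ∧ ∃ f : E →L[ℝ] ℝ, ‖f‖ = 1 ∧ f x = 1 ∧ ∀ u : E, ‖u‖ ≤ 1 → u ≠ x → f u < 1

/-- The Banach-space adjoint `T* : Y* → X*`, `T* y* = y* ∘ T`. -/
def opAdjoint {X Y : Type*} [NormedAddCommGroup X] [NormedSpace ℝ X]
    [NormedAddCommGroup Y] [NormedSpace ℝ Y] (T : X →L[ℝ] Y) :
    StrongDual ℝ Y →L[ℝ] StrongDual ℝ X :=
  (ContinuousLinearMap.compL ℝ X Y ℝ).flip T

lemma opAdjoint_apply {X Y : Type*} [NormedAddCommGroup X] [NormedSpace ℝ X]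
    [NormedAddCommGroup Y] [NormedSpace ℝ Y] (T : X →L[ℝ] Y) (φ : StrongDual ℝ Y) (x : X) :
    opAdjoint T φ x = φ (T x) := rfl

/-- James-type lemma: if `x ⊥_B y` then there is a norm-≤1 functional killing `y` and
norming `x`. -/
lemma james_aux {E : Type*} [NormedAddCommGroup E] [NormedSpace ℝ E] {x y : E}
    (hx : x ≠ 0) (hy : y ≠ 0) (h : BJOrth x y) :
    ∃ F : E →L[ℝ] ℝ, ‖F‖ ≤ 1 ∧ F y = 0 ∧ F x = ‖x‖ := by
  -- x ∉ span ℝ {y}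
  have hxy : x ∉ Submodule.span ℝ {y} := by
    intro hmem
    rcases Submodule.mem_span_singleton.mp hmem with ⟨a, rfl⟩
    have ha : a ≠ 0 := by rintro rfl; simp at hx
    have := h (-a)
    rw [neg_smul, add_neg_cancel, norm_zero] at this
    exact hx (by simpa using norm_le_zero_iff.mp this)
  set f₀ : E →ₗ.[ℝ] ℝ := LinearPMap.mkSpanSingleton y (0 : ℝ) hy with hf₀
  have hdom₀ : f₀.domain = Submodule.span ℝ {y} := rfl
  have hxdom : x ∉ f₀.domain := by rw [hdom₀]; exact hxy
  set g : E →ₗ.[ℝ] ℝ := f₀.supSpanSingleton x ‖x‖ hxdom with hg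
  have hgdom : g.domain = f₀.domain ⊔ Submodule.span ℝ {x} :=
    LinearPMap.domain_supSpanSingleton _ _ _ _
  -- the key bound
  have hbound : ∀ z : g.domain, g z ≤ ‖(z : E)‖ := by
    rintro ⟨z, hz⟩
    rw [hgdom] at hz
    rcases Submodule.mem_sup.mp hz with ⟨p, hp, q, hq, rfl⟩
    rcases Submodule.mem_span_singleton.mp hq with ⟨c, rfl⟩
    have happ : g ⟨p + c • x, hz⟩ = f₀ ⟨p, hp⟩ + c • ‖x‖ :=
      LinearPMap.supSpanSingleton_apply_mk f₀ x ‖x‖ hxdom p hp c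
    rw [happ]
    rcases Submodule.mem_span_singleton.mp hp with ⟨a, rfl⟩
    have hf₀p : f₀ ⟨a • y, hp⟩ = a • (0 : ℝ) := LinearPMap.mkSpanSingleton'_apply _ _ _ a _
    rw [hf₀p, smul_zero, zero_add, smul_eq_mul]
    rcases le_or_gt c 0 with hc | hc
    · exact le_trans (mul_nonpos_of_nonpos_of_nonneg hc (norm_nonneg x)) (norm_nonneg _)
    · have key : c * ‖x‖ ≤ c * ‖x + (a / c) • y‖ :=
        mul_le_mul_of_nonneg_left (h (a / c)) hc.le
      calc c * ‖x‖ ≤ c * ‖x + (a / c) • y‖ := key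
        _ = ‖c • (x + (a / c) • y)‖ := by
            rw [norm_smul, Real.norm_eq_abs, abs_of_pos hc]
        _ = ‖a • y + c • x‖ := by
            rw [smul_add, smul_smul, mul_div_cancel₀ _ hc.ne', add_comm]
  obtain ⟨G, hG1, hG2⟩ := exists_extension_of_le_sublinear g (fun z => ‖z‖)
    (fun c hc z => by simp [norm_smul, abs_of_pos hc])
    (fun z w => norm_add_le z w) hbound
  have hGle : ∀ z, |G z| ≤ ‖z‖ := by
    intro z
    rw [abs_le]
    constructor
    · have := hG2 (-z); rw [map_neg, norm_neg] at this; linarith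
    · exact hG2 z
  refine ⟨G.mkContinuous 1 (fun z => by simpa using hGle z), ?_, ?_, ?_⟩
  · exact LinearMap.mkContinuous_norm_le G zero_le_one _
  · -- G y = 0
    have hymem : y ∈ g.domain := by
      rw [hgdom]
      exact Submodule.mem_sup_left (Submodule.mem_span_singleton_self y)
    have hval : g ⟨y, hymem⟩ = 0 := by
      have h0 : y ∈ f₀.domain := Submodule.mem_span_singleton_self y
      have happ := LinearPMap.supSpanSingleton_apply_mk f₀ x ‖x‖ hxdom y h0 0
      have hyy : (⟨y, hymem⟩ : g.domain) = ⟨y + (0:ℝ) • x, by simpa using hymem⟩ := by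
        ext; simp
      rw [hyy, happ]
      have hyeq : (⟨y, h0⟩ : f₀.domain) = ⟨(1:ℝ) • y, by simpa using h0⟩ := by ext; simp
      have : f₀ ⟨y, h0⟩ = (1:ℝ) • (0:ℝ) := by
        rw [hyeq]; exact LinearPMap.mkSpanSingleton'_apply _ _ _ 1 _
      rw [this]; simp
    exact (hG1 ⟨y, hymem⟩).trans hval
  · -- G x = ‖x‖
    have hxmem : x ∈ g.domain := by
      rw [hgdom]
      exact Submodule.mem_sup_right (Submodule.mem_span_singleton_self x)
    have hval : g ⟨x, hxmem⟩ = ‖x‖ := by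
      have happ := LinearPMap.supSpanSingleton_apply_mk f₀ x ‖x‖ hxdom 0 f₀.domain.zero_mem 1
      have hyy : (⟨x, hxmem⟩ : g.domain) = ⟨0 + (1:ℝ) • x, by simpa using hxmem⟩ := by
        ext; simp
      rw [hyy, happ]
      have : f₀ ⟨0, f₀.domain.zero_mem⟩ = 0 := by
        have : (⟨0, f₀.domain.zero_mem⟩ : f₀.domain) = 0 := by ext; simp
        rw [this]; exact map_zero f₀.toFun
      rw [this]; simp
    exact (hG1 ⟨x, hxmem⟩).trans hval


lemma smulRight_isCompact {X Y : Type*} [NormedAddCommGroup X] [NormedSpace ℝ X]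
    [NormedAddCommGroup Y] [NormedSpace ℝ Y] (ψ : X →L[ℝ] ℝ) (y₀ : Y) :
    IsCompactOperator (ψ.smulRight y₀) := by
  refine ⟨(fun a : ℝ => a • y₀) '' Icc (-(‖ψ‖ + 1)) (‖ψ‖ + 1),
    (isCompact_Icc.image (by continuity)), ?_⟩
  have : Metric.ball (0 : X) 1 ⊆
      (ψ.smulRight y₀) ⁻¹' ((fun a : ℝ => a • y₀) '' Icc (-(‖ψ‖ + 1)) (‖ψ‖ + 1)) := by
    intro u hu
    refine ⟨ψ u, ?_, rfl⟩
    have := ψ.le_opNorm u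
    rw [mem_ball_zero_iff] at hu
    have h1 : |ψ u| ≤ ‖ψ‖ := by
      calc |ψ u| = ‖ψ u‖ := rfl
        _ ≤ ‖ψ‖ * ‖u‖ := ψ.le_opNorm u
        _ ≤ ‖ψ‖ * 1 := by nlinarith [norm_nonneg ψ, hu.le, norm_nonneg u]
        _ = ‖ψ‖ := mul_one _
    have := abs_le.mp h1
    constructor <;> [linarith; linarith]
  exact Filter.mem_of_superset (Metric.ball_mem_nhds 0 one_pos) this

lemma norm_le_adjoint {X Y : Type*} [NormedAddCommGroup X] [NormedSpace ℝ X]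
    [NormedAddCommGroup Y] [NormedSpace ℝ Y] (T : X →L[ℝ] Y) :
    ‖T‖ ≤ ‖opAdjoint T‖ := by
  refine T.opNorm_le_bound (norm_nonneg (opAdjoint T)) fun u => ?_
  by_cases h : T u = 0
  · rw [h, norm_zero]; positivity
  obtain ⟨g, hg1, hg2⟩ := exists_dual_vector ℝ (T u) (norm_ne_zero_iff.mpr h)
  calc ‖T u‖ = g (T u) := hg2.symm
    _ = opAdjoint T g u := rfl
    _ ≤ ‖opAdjoint T g‖ * ‖u‖ :=
        le_trans (le_abs_self _) ((opAdjoint T g).le_opNorm u)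
    _ ≤ (‖opAdjoint T‖ * ‖g‖) * ‖u‖ := by
        gcongr; exact (opAdjoint T).le_opNorm g
    _ = ‖opAdjoint T‖ * ‖u‖ := by rw [hg1, mul_one]


/-- If `φ` is exposed in the dual unit ball by `y₀`, `‖fₙ‖ ≤ 1` and `fₙ y₀ → 1`, then
`fₙ v → φ v` for every `v`. -/
lemma exposed_tendsto {Y : Type*} [NormedAddCommGroup Y] [NormedSpace ℝ Y]
    (φ : StrongDual ℝ Y) (y₀ : Y)
    (hexp : ∀ g : StrongDual ℝ Y, ‖g‖ ≤ 1 → g ≠ φ → g y₀ < 1) (v : Y)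
    (f : ℕ → StrongDual ℝ Y) (hf : ∀ n, ‖f n‖ ≤ 1)
    (hy : Tendsto (fun n => f n y₀) atTop (𝓝 1)) :
    Tendsto (fun n => f n v) atTop (𝓝 (φ v)) := by
  rw [Metric.tendsto_atTop]
  intro ε hε
  -- the bad set in the weak-star dual
  set A : Set (WeakDual ℝ Y) :=
    (WeakDual.toStrongDual ⁻¹' closedBall 0 1) ∩ {g : WeakDual ℝ Y | ε ≤ |g v - φ v|} with hA
  have hAcomp : IsCompact A := by
    apply (WeakDual.isCompact_closedBall (𝕜 := ℝ) (E := Y) 0 1).inter_right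
    have hcont : Continuous fun g : WeakDual ℝ Y => |g v - φ v| :=
      ((WeakDual.eval_continuous v).sub continuous_const).abs
    exact isClosed_le continuous_const hcont
  rcases A.eq_empty_or_nonempty with hAe | hAne
  · refine ⟨0, fun n _ => ?_⟩
    by_contra hcon
    push_neg at hcon
    have : (StrongDual.toWeakDual (f n)) ∈ A := by
      constructor
      · simp only [mem_preimage, mem_closedBall_zero_iff]
        simpa using hf n
      · simp only [mem_setOf_eq]
        rw [Real.dist_eq] at hcon
        exact hcon
    rw [hAe] at this; exact this
  · obtain ⟨g₀, hg₀A, hmax⟩ := hAcomp.exists_isMaxOn hAne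
      ((WeakDual.eval_continuous y₀).continuousOn)
    have hg₀ball : ‖WeakDual.toStrongDual g₀‖ ≤ 1 := by
      have := hg₀A.1
      simpa [mem_closedBall_zero_iff] using this
    have hg₀ne : WeakDual.toStrongDual g₀ ≠ φ := by
      intro hcon
      have := hg₀A.2
      simp only [mem_setOf_eq] at this
      have hzero : (g₀ v : ℝ) = φ v := by rw [← hcon]; rfl
      rw [hzero] at this
      simp at this
      linarith
    have hM : g₀ y₀ < 1 := hexp _ hg₀ball hg₀ne
    have hev : ∀ᶠ n in atTop, f n y₀ > g₀ y₀ := hy.eventually (eventually_gt_nhds hM)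
    obtain ⟨N, hN⟩ := eventually_atTop.mp hev
    refine ⟨N, fun n hn => ?_⟩
    have hnA : StrongDual.toWeakDual (f n) ∉ A := by
      intro hmem
      have := hmax hmem
      have hle : f n y₀ ≤ g₀ y₀ := this
      exact absurd (hN n hn) (not_lt.mpr hle)
    have hball : StrongDual.toWeakDual (f n) ∈
        WeakDual.toStrongDual ⁻¹' closedBall 0 1 := by
      simp only [mem_preimage, mem_closedBall_zero_iff]
      simpa using hf n
    have : ¬ ε ≤ |f n v - φ v| := by
      intro hcon
      exact hnA ⟨hball, hcon⟩
    rw [Real.dist_eq]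
    exact not_le.mp this


set_option maxHeartbeats 2000000 in
lemma key_estimate {X Y : Type*} [NormedAddCommGroup X] [NormedSpace ℝ X]
    [NormedAddCommGroup Y] [NormedSpace ℝ Y] [CompleteSpace Y]
    (T : X →L[ℝ] Y) (hTc : IsCompactOperator T)
    (ψ : StrongDual ℝ X) (hψ : ψ ≠ 0) (φ : StrongDual ℝ Y) (hφ : ‖φ‖ ≤ 1) (y₀ : Y)
    (hy₀ : ‖y₀‖ = 1)
    (hexp : ∀ g : StrongDual ℝ Y, ‖g‖ ≤ 1 → g ≠ φ → g y₀ < 1)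
    (ε : ℝ) (hε : 0 < ε) :
    ∃ δ > 0, ∀ t : ℝ, |t| < δ →
      ‖ψ.smulRight y₀ + t • T‖ ≤ ‖ψ + t • opAdjoint T φ‖ + ε * |t| := by
  classical
  by_contra hcon
  push_neg at hcon
  set S : X →L[ℝ] Y := ψ.smulRight y₀ with hSdef
  set xs : StrongDual ℝ X := opAdjoint T φ with hxsdef
  have hψpos : (0:ℝ) < ‖ψ‖ := norm_pos_iff.mpr hψ
  set C : ℝ := ‖xs‖ + ‖T‖ with hCdef
  have hC : 0 ≤ C := by positivity
  set δ₀ : ℝ := ‖ψ‖ / (C + 1) with hδ₀def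
  have hδ₀ : 0 < δ₀ := by positivity
  clear_value S xs
  have hm : 0 < ‖ψ‖ - δ₀ * C := by
    have : δ₀ * C < ‖ψ‖ := by
      rw [hδ₀def, div_mul_eq_mul_div, div_lt_iff₀ (by linarith)]
      nlinarith
    linarith
  -- choose the sequence of parameters t n
  have hsel : ∀ n : ℕ, ∃ t : ℝ, |t| < min δ₀ (1 / (n + 1)) ∧
      ‖ψ + t • xs‖ + ε * |t| < ‖S + t • T‖ := by
    intro n
    obtain ⟨t, ht1, ht2⟩ := hcon (min δ₀ (1 / (n + 1))) (lt_min hδ₀ (by positivity))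
    exact ⟨t, ht1, ht2⟩
  choose t ht1 ht2 using hsel
  have htδ₀ : ∀ n, |t n| < δ₀ := fun n => (ht1 n).trans_le (min_le_left _ _)
  have ht0 : Tendsto (fun n => |t n|) atTop (𝓝 0) := by
    apply squeeze_zero (fun n => abs_nonneg _)
      (fun n => ((ht1 n).trans_le (min_le_right _ _)).le)
    exact tendsto_one_div_add_atTop_nhds_zero_nat
  -- choose the almost-norming vectors u n, normalized to ψ (u n) ≥ 0
  have hsel2 : ∀ n : ℕ, ∃ u : X, ‖u‖ < 1 ∧
      ‖ψ + t n • xs‖ + ε * |t n| < ‖(S + t n • T) u‖ := by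
    intro n
    obtain ⟨u, hu1, hu2⟩ := (S + t n • T).exists_lt_apply_of_lt_opNorm (ht2 n)
    exact ⟨u, hu1, hu2⟩
  choose u₀ hu₀1 hu₀2 using hsel2
  set u : ℕ → X := fun n => if 0 ≤ ψ (u₀ n) then u₀ n else -u₀ n with hudef
  have hun : ∀ n, ‖u n‖ < 1 := by
    intro n; rw [hudef]; dsimp only
    split <;> simpa using hu₀1 n
  have hψu : ∀ n, 0 ≤ ψ (u n) := by
    intro n; rw [hudef]; dsimp only
    split
    · assumption
    · rw [map_neg]; linarith [lt_of_not_ge (by assumption : ¬ 0 ≤ ψ (u₀ n))]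
  have hku : ∀ n, ‖ψ + t n • xs‖ + ε * |t n| < ‖(S + t n • T) (u n)‖ := by
    intro n; rw [hudef]; dsimp only
    split
    · exact hu₀2 n
    · rw [map_neg, norm_neg]; exact hu₀2 n
  set w : ℕ → Y := fun n => (S + t n • T) (u n) with hwdef
  clear_value w
  have hwn : ∀ n, w n = (S + t n • T) (u n) := fun n => congrFun hwdef n
  -- lower bound on ‖ψ + t • xs‖
  have hlow : ∀ n, ‖ψ‖ - |t n| * ‖xs‖ ≤ ‖ψ + t n • xs‖ := by
    intro n
    have h0 : ‖ψ‖ ≤ ‖ψ + t n • xs‖ + ‖t n • xs‖ := by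
      calc ‖ψ‖ = ‖(ψ + t n • xs) + (-(t n • xs))‖ := by rw [add_neg_cancel_right]
        _ ≤ ‖ψ + t n • xs‖ + ‖-(t n • xs)‖ := norm_add_le _ _
        _ = ‖ψ + t n • xs‖ + ‖t n • xs‖ := by rw [norm_neg]
    have h1 : ‖t n • xs‖ = |t n| * ‖xs‖ := by rw [norm_smul, Real.norm_eq_abs]
    linarith
  have hwlb : ∀ n, ‖ψ‖ - δ₀ * C ≤ ‖w n‖ := by
    intro n
    have h2 : ‖ψ‖ - δ₀ * C ≤ ‖ψ‖ - |t n| * ‖xs‖ := by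
      have hxsC : ‖xs‖ ≤ C := by rw [hCdef]; linarith [norm_nonneg T]
      have hmul : |t n| * ‖xs‖ ≤ δ₀ * C :=
        mul_le_mul (htδ₀ n).le hxsC (norm_nonneg xs) hδ₀.le
      linarith
    refine h2.trans ((hlow n).trans ?_)
    have h3 := hku n
    have h4 : 0 ≤ ε * |t n| := mul_nonneg hε.le (abs_nonneg _)
    rw [hwn n]
    linarith
  have hwne : ∀ n, w n ≠ 0 := by
    intro n hcon0
    have := hwlb n
    rw [hcon0, norm_zero] at this
    linarith
  -- norming functionals
  have hsel3 : ∀ n : ℕ, ∃ g : StrongDual ℝ Y, ‖g‖ = 1 ∧ g (w n) = ‖w n‖ :=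
    fun n => exists_dual_vector ℝ (w n) (norm_ne_zero_iff.mpr (hwne n))
  choose f hf1 hf2 using hsel3
  -- expansion of w n
  have hwexp : ∀ n, w n = ψ (u n) • y₀ + t n • T (u n) := by
    intro n
    rw [hwn n, hSdef]
    simp [ContinuousLinearMap.smulRight_apply]
  have heq : ∀ n, ψ (u n) * f n y₀ + t n * f n (T (u n)) = ‖w n‖ := by
    intro n
    rw [← hf2 n]
    conv_lhs => rw [show ψ (u n) * f n y₀ + t n * f n (T (u n))
      = f n (ψ (u n) • y₀ + t n • T (u n)) by rw [map_add, map_smul, map_smul]; simp]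
    rw [← hwexp n]
  -- upper bound via evaluation
  have hub : ∀ n, ψ (u n) + t n * φ (T (u n)) ≤ ‖ψ + t n • xs‖ := by
    intro n
    have h1 : (ψ + t n • xs) (u n) = ψ (u n) + t n * φ (T (u n)) := by
      rw [ContinuousLinearMap.add_apply, ContinuousLinearMap.smul_apply, hxsdef,
        opAdjoint_apply, smul_eq_mul]
    calc ψ (u n) + t n * φ (T (u n)) = (ψ + t n • xs) (u n) := h1.symm
      _ ≤ |(ψ + t n • xs) (u n)| := le_abs_self _
      _ ≤ ‖ψ + t n • xs‖ * ‖u n‖ := (ψ + t n • xs).le_opNorm (u n)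
      _ ≤ ‖ψ + t n • xs‖ * 1 := by gcongr; exact (hun n).le
      _ = ‖ψ + t n • xs‖ := mul_one _
  -- basic bounds
  have hfy₀le : ∀ n, f n y₀ ≤ 1 := by
    intro n
    calc f n y₀ ≤ |f n y₀| := le_abs_self _
      _ ≤ ‖f n‖ * ‖y₀‖ := (f n).le_opNorm y₀
      _ = 1 := by rw [hf1 n, hy₀, mul_one]
  have hψule : ∀ n, ψ (u n) ≤ ‖ψ‖ := by
    intro n
    calc ψ (u n) ≤ |ψ (u n)| := le_abs_self _
      _ ≤ ‖ψ‖ * ‖u n‖ := ψ.le_opNorm (u n)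
      _ ≤ ‖ψ‖ * 1 := by gcongr; exact (hun n).le
      _ = ‖ψ‖ := mul_one _
  have hfTu : ∀ n, |f n (T (u n))| ≤ ‖T‖ := by
    intro n
    calc |f n (T (u n))| ≤ ‖f n‖ * ‖T (u n)‖ := (f n).le_opNorm _
      _ = ‖T (u n)‖ := by rw [hf1 n, one_mul]
      _ ≤ ‖T‖ * ‖u n‖ := T.le_opNorm _
      _ ≤ ‖T‖ * 1 := by gcongr; exact (hun n).le
      _ = ‖T‖ := mul_one _
  -- the main strict inequality (A)
  have hA : ∀ n, ψ (u n) + t n * φ (T (u n)) + ε * |t n|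
      < ψ (u n) * f n y₀ + t n * f n (T (u n)) := by
    intro n
    rw [heq n]
    have h5 := hku n
    rw [← hwn n] at h5
    have h6 := hub n
    linarith
  -- t n ≠ 0 and separation of d n
  have hd : ∀ n, ε < |f n (T (u n)) - φ (T (u n))| := by
    intro n
    have htne : t n ≠ 0 := by
      intro h0
      have hA' := hA n
      rw [h0] at hA'
      simp only [zero_mul, abs_zero, mul_zero, add_zero] at hA'
      have hh := mul_le_of_le_one_right (hψu n) (hfy₀le n)
      linarith
    have h1 : ψ (u n) * f n y₀ ≤ ψ (u n) := mul_le_of_le_one_right (hψu n) (hfy₀le n)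
    have h2 : ε * |t n| < t n * (f n (T (u n)) - φ (T (u n))) := by
      rw [mul_sub]
      linarith [hA n]
    have h3 : t n * (f n (T (u n)) - φ (T (u n)))
        ≤ |t n| * |f n (T (u n)) - φ (T (u n))| := by
      rw [← abs_mul]; exact le_abs_self _
    have habs : 0 < |t n| := abs_pos.mpr htne
    have h4 : |t n| * ε < |t n| * |f n (T (u n)) - φ (T (u n))| := by
      rw [mul_comm]
      exact lt_of_lt_of_le h2 h3
    exact (mul_lt_mul_iff_right₀ habs).mp h4
  -- f n y₀ → 1
  have hfy₀ge : ∀ n, 1 - |t n| * (C / ‖ψ‖) ≤ f n y₀ := by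
    intro n
    have h1 : ‖ψ‖ - |t n| * C ≤ ψ (u n) * f n y₀ := by
      have := heq n
      have h2 := (hwlb n)
      have h2' := hlow n
      have h3 : ‖ψ‖ - |t n| * ‖xs‖ ≤ ‖w n‖ := by
        have hku' := hku n
        rw [← hwn n] at hku'
        have hnn := mul_nonneg hε.le (abs_nonneg (t n))
        linarith
      have h4 : |t n * f n (T (u n))| ≤ |t n| * ‖T‖ := by
        rw [abs_mul]; exact mul_le_mul_of_nonneg_left (hfTu n) (abs_nonneg _)
      have h5 := abs_le.mp h4
      rw [hCdef]
      linarith [this]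
    have hfy₀pos : 0 < f n y₀ := by
      by_contra hneg
      push_neg at hneg
      have : ψ (u n) * f n y₀ ≤ 0 := mul_nonpos_of_nonneg_of_nonpos (hψu n) hneg
      have h2 : ‖ψ‖ - δ₀ * C ≤ ‖ψ‖ - |t n| * C := by
        nlinarith [(htδ₀ n).le, abs_nonneg (t n)]
      linarith
    have h6 : ψ (u n) * f n y₀ ≤ ‖ψ‖ * f n y₀ :=
      mul_le_mul_of_nonneg_right (hψule n) hfy₀pos.le
    rw [div_eq_mul_inv]
    have h7 : ‖ψ‖ - |t n| * C ≤ ‖ψ‖ * f n y₀ := le_trans h1 h6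
    have h8 : (‖ψ‖ - |t n| * C) / ‖ψ‖ ≤ f n y₀ := by
      rw [div_le_iff₀ hψpos]
      linarith [mul_comm (f n y₀) ‖ψ‖ ▸ h7]
    calc 1 - |t n| * (C * ‖ψ‖⁻¹) = (‖ψ‖ - |t n| * C) / ‖ψ‖ := by
          field_simp
      _ ≤ f n y₀ := h8
  have hfy₀tend : Tendsto (fun n => f n y₀) atTop (𝓝 1) := by
    apply tendsto_of_tendsto_of_tendsto_of_le_of_le (g := fun n => 1 - |t n| * (C / ‖ψ‖))
      (h := fun _ => (1:ℝ)) ?_ tendsto_const_nhds hfy₀ge hfy₀le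
    have : Tendsto (fun n => |t n| * (C / ‖ψ‖)) atTop (𝓝 (0 * (C / ‖ψ‖))) :=
      ht0.mul_const _
    rw [zero_mul] at this
    simpa using (tendsto_const_nhds (x := (1:ℝ))).sub this
  -- compactness: extract convergent subsequence of T (u n)
  have hK : IsCompact (closure (⇑T '' closedBall 0 1)) := by
    have := IsCompactOperator.isCompact_closure_image_closedBall
      (𝕜₁ := ℝ) (f := (T : X →ₗ[ℝ] Y)) hTc 1
    simpa using this
  have hmemK : ∀ n, T (u n) ∈ closure (⇑T '' closedBall 0 1) := by
    intro n
    exact subset_closure (mem_image_of_mem _ (by simpa [mem_closedBall_zero_iff] using (hun n).le))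
  obtain ⟨v, hvK, σ, hσmono, hσtend⟩ := hK.tendsto_subseq hmemK
  have hfsub : Tendsto (fun k => f (σ k) y₀) atTop (𝓝 1) :=
    hfy₀tend.comp hσmono.tendsto_atTop
  have hfv : Tendsto (fun k => f (σ k) v) atTop (𝓝 (φ v)) :=
    exposed_tendsto φ y₀ hexp v (fun k => f (σ k)) (fun k => (hf1 (σ k)).le) hfsub
  -- the contradiction
  have hdle : ∀ k, |f (σ k) (T (u (σ k))) - φ (T (u (σ k)))|
      ≤ 2 * ‖T (u (σ k)) - v‖ + |f (σ k) v - φ v| := by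
    intro k
    set n := σ k
    have hsplit : f n (T (u n)) - φ (T (u n))
        = (f n (T (u n) - v)) + (f n v - φ v) + (φ (v - T (u n))) := by
      rw [map_sub, map_sub]; ring
    rw [hsplit]
    have b1 : |f n (T (u n) - v)| ≤ ‖T (u n) - v‖ := by
      calc |f n (T (u n) - v)| ≤ ‖f n‖ * ‖T (u n) - v‖ := (f n).le_opNorm _
        _ = ‖T (u n) - v‖ := by rw [hf1 n, one_mul]
    have b2 : |φ (v - T (u n))| ≤ ‖T (u n) - v‖ := by
      calc |φ (v - T (u n))| ≤ ‖φ‖ * ‖v - T (u n)‖ := φ.le_opNorm _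
        _ ≤ 1 * ‖v - T (u n)‖ := by gcongr
        _ = ‖T (u n) - v‖ := by rw [one_mul, norm_sub_rev]
    calc |f n (T (u n) - v) + (f n v - φ v) + φ (v - T (u n))|
        ≤ |f n (T (u n) - v) + (f n v - φ v)| + |φ (v - T (u n))| := abs_add_le _ _
      _ ≤ |f n (T (u n) - v)| + |f n v - φ v| + |φ (v - T (u n))| := by
          gcongr; exact abs_add_le _ _
      _ ≤ ‖T (u n) - v‖ + |f n v - φ v| + ‖T (u n) - v‖ := by gcongr
      _ = 2 * ‖T (u n) - v‖ + |f n v - φ v| := by ring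
  have hbtend : Tendsto (fun k => 2 * ‖T (u (σ k)) - v‖ + |f (σ k) v - φ v|) atTop (𝓝 0) := by
    have h1 : Tendsto (fun k => ‖T (u (σ k)) - v‖) atTop (𝓝 0) := by
      have := tendsto_iff_norm_sub_tendsto_zero.mp hσtend
      simpa [Function.comp] using this
    have h2 : Tendsto (fun k => |f (σ k) v - φ v|) atTop (𝓝 0) := by
      have := hfv.sub_const (φ v)
      rw [sub_self] at this
      simpa using this.abs
    have := (h1.const_mul 2).add h2
    simpa using this
  have hev : ∀ᶠ k in atTop, 2 * ‖T (u (σ k)) - v‖ + |f (σ k) v - φ v| < ε :=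
    hbtend.eventually (gt_mem_nhds hε)
  obtain ⟨k, hk⟩ := hev.exists
  exact absurd ((hd (σ k)).trans_le (hdle k)) (not_lt.mpr hk.le)



set_option maxHeartbeats 2000000 in
theorem stmt3 {X Y : Type*} [NormedAddCommGroup X] [NormedSpace ℝ X] [CompleteSpace X]
    [NormedAddCommGroup Y] [NormedSpace ℝ Y] [CompleteSpace Y]
    (hreflX : Function.Surjective (NormedSpace.inclusionInDoubleDual ℝ X))
    (hreflY : Function.Surjective (NormedSpace.inclusionInDoubleDual ℝ Y))
    (hball : {φ : StrongDual ℝ Y | ‖φ‖ ≤ 1} =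
        convexHull ℝ {φ : StrongDual ℝ Y | ExposedPt φ})
    (T : X →L[ℝ] Y) (hTc : IsCompactOperator T)
    (hleft : ∀ S : X →L[ℝ] Y, IsCompactOperator S → BJOrth T S → BJOrth S T) :
    ∀ φ : StrongDual ℝ Y,
      (‖φ‖ = 1 ∧ ‖opAdjoint T φ‖ = ‖opAdjoint T‖) → ExposedPt φ →
      ∀ ψ : StrongDual ℝ X,
        BJOrth (opAdjoint T φ) ψ → BJOrth ψ (opAdjoint T φ) := by
  intro φ hφM hexpφ ψ horth
  obtain ⟨hφ1, hφ2⟩ := hφM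
  by_cases hψ0 : ψ = 0
  · intro s
    simp only [hψ0, norm_zero, zero_add]
    positivity
  set xs : StrongDual ℝ X := opAdjoint T φ with hxsdef
  by_cases hx0 : xs = 0
  · intro s; rw [hx0]; simp
  -- James-type functional and the corresponding point of X
  obtain ⟨F, hF1, hF2, hF3⟩ := james_aux hx0 hψ0 horth
  obtain ⟨x, hxF⟩ := hreflX F
  have hxnorm : ‖x‖ ≤ 1 := by
    have h := (inclusionInDoubleDualLi (𝕜 := ℝ) (E := X)).norm_map x
    have hco : (inclusionInDoubleDualLi (𝕜 := ℝ) (E := X)) x = inclusionInDoubleDual ℝ X x := rfl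
    rw [hco, hxF] at h
    rw [← h]; exact hF1
  have hψx : ψ x = 0 := by
    have := NormedSpace.dual_def (𝕜 := ℝ) (E := X) x ψ
    rw [hxF] at this
    rw [← this, hF2]
  have hxsx : xs x = ‖xs‖ := by
    have := NormedSpace.dual_def (𝕜 := ℝ) (E := X) x xs
    rw [hxF] at this
    rw [← this, hF3]
  -- the exposing vector y₀
  obtain ⟨hφball, f, hf1, hf2, hf3⟩ := hexpφ
  obtain ⟨y₀, hy₀F⟩ := hreflY f
  have hy₀norm : ‖y₀‖ = 1 := by
    have h := (inclusionInDoubleDualLi (𝕜 := ℝ) (E := Y)).norm_map y₀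
    have hco : (inclusionInDoubleDualLi (𝕜 := ℝ) (E := Y)) y₀ = inclusionInDoubleDual ℝ Y y₀ := rfl
    rw [hco, hy₀F, hf1] at h
    exact h.symm
  have hexp' : ∀ g : StrongDual ℝ Y, ‖g‖ ≤ 1 → g ≠ φ → g y₀ < 1 := by
    intro g h1 h2
    have := NormedSpace.dual_def (𝕜 := ℝ) (E := Y) y₀ g
    rw [hy₀F] at this
    rw [← this]
    exact hf3 g h1 h2
  -- the rank one operator S
  set S : X →L[ℝ] Y := ψ.smulRight y₀ with hSdef
  have hSnorm : ‖S‖ = ‖ψ‖ := by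
    rw [hSdef, ContinuousLinearMap.norm_smulRight_apply, hy₀norm, mul_one]
  have hSc : IsCompactOperator S := smulRight_isCompact ψ y₀
  -- T is BJ-orthogonal to S
  have hTS : BJOrth T S := by
    intro s
    have h2 : (T + s • S) x = T x := by
      rw [ContinuousLinearMap.add_apply, ContinuousLinearMap.smul_apply, hSdef,
        ContinuousLinearMap.smulRight_apply, hψx, zero_smul, smul_zero, add_zero]
    have h1 : ‖(T + s • S) x‖ ≤ ‖T + s • S‖ := by
      calc ‖(T + s • S) x‖ ≤ ‖T + s • S‖ * ‖x‖ := (T + s • S).le_opNorm x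
        _ ≤ ‖T + s • S‖ * 1 := by gcongr
        _ = ‖T + s • S‖ := mul_one _
    have h3 : ‖xs‖ ≤ ‖T x‖ := by
      calc ‖xs‖ = xs x := hxsx.symm
        _ = φ (T x) := rfl
        _ ≤ |φ (T x)| := le_abs_self _
        _ ≤ ‖φ‖ * ‖T x‖ := φ.le_opNorm _
        _ = ‖T x‖ := by rw [hφ1, one_mul]
    have h4 : ‖T‖ ≤ ‖xs‖ := by
      rw [hxsdef, hφ2]
      exact norm_le_adjoint T
    rw [h2] at h1
    linarith
  have hST : BJOrth S T := hleft S hSc hTS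
  -- conclude using the key estimate
  intro s
  by_contra hlt
  push_neg at hlt
  have hsne : s ≠ 0 := by
    rintro rfl
    simp at hlt
  have hspos : 0 < |s| := abs_pos.mpr hsne
  set ε : ℝ := (‖ψ‖ - ‖ψ + s • xs‖) / |s| with hεdef
  have hεpos : 0 < ε := div_pos (by linarith) hspos
  obtain ⟨δ, hδpos, hkey⟩ := key_estimate T hTc ψ hψ0 φ hφ1.le y₀ hy₀norm hexp'
    (ε / 2) (by positivity)
  set θ : ℝ := min (δ / (2 * |s|)) 1 with hθdef
  have hθpos : 0 < θ := lt_min (by positivity) one_pos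
  have hθle1 : θ ≤ 1 := min_le_right _ _
  have hts : |θ * s| < δ := by
    rw [abs_mul, abs_of_pos hθpos]
    calc θ * |s| ≤ (δ / (2 * |s|)) * |s| := by
          gcongr; exact min_le_left _ _
      _ = δ / 2 := by field_simp
      _ < δ := by linarith
  have hconv : ‖ψ + (θ * s) • xs‖ ≤ (1 - θ) * ‖ψ‖ + θ * ‖ψ + s • xs‖ := by
    have hid : ψ + (θ * s) • xs = (1 - θ) • ψ + θ • (ψ + s • xs) := by
      module
    rw [hid]
    calc ‖(1 - θ) • ψ + θ • (ψ + s • xs)‖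
        ≤ ‖(1 - θ) • ψ‖ + ‖θ • (ψ + s • xs)‖ := norm_add_le _ _
      _ = (1 - θ) * ‖ψ‖ + θ * ‖ψ + s • xs‖ := by
          rw [norm_smul, norm_smul, Real.norm_eq_abs, Real.norm_eq_abs,
            abs_of_nonneg (by linarith : (0:ℝ) ≤ 1 - θ), abs_of_pos hθpos]
  have hchain : ‖ψ‖ ≤ ‖ψ + (θ * s) • xs‖ + (ε / 2) * |θ * s| := by
    calc ‖ψ‖ = ‖S‖ := hSnorm.symm
      _ ≤ ‖S + (θ * s) • T‖ := hST (θ * s)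
      _ ≤ ‖ψ + (θ * s) • xs‖ + (ε / 2) * |θ * s| := hkey (θ * s) hts
  have hεs : ε * |s| = ‖ψ‖ - ‖ψ + s • xs‖ := by
    rw [hεdef, div_mul_cancel₀ _ hspos.ne']
  have habs : |θ * s| = θ * |s| := by rw [abs_mul, abs_of_pos hθpos]
  rw [habs] at hchain
  nlinarith [hconv, hchain, hθpos, hspos]
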